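/- arXiv:1902.00657 — 5 statements merged into one kernel-verified Lean document; each statement's English description precedes it below -/
import Mathlib

section
/- Suppose 0 < η_ch ≤ 1, 0 < η_dch ≤ 1, η_ch·η_dch < 1, P_ch > 0, P_dch > 0, and ΔS = P_ch·η_ch − P_dch/η_dch ≥ 0. Let (P̃_ch, P̃_dch) = (ΔS/η_ch, 0). Then the change in net injected power ΔP = (P̃_dch − P̃_ch) − (P_dch − P_ch) satisfies ΔP = (1/(η_dch·η_ch) − 1)·P_dch > 0. -/
theorem storage_equiv_net_power_change_nonneg
    (ηch ηdch Pch Pdch ΔS : ℝ)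
    (hch : 0 < ηch) (hch1 : ηch ≤ 1)
    (hdch : 0 < ηdch) (hdch1 : ηdch ≤ 1)
    (hprod : ηch * ηdch < 1)
    (hPch : 0 < Pch) (hPdch : 0 < Pdch)
    (hΔS : ΔS = Pch * ηch - Pdch / ηdch) (hΔSnn : 0 ≤ ΔS)
    (Ptch Ptdch : ℝ) (hT : Ptch = ΔS / ηch ∧ Ptdch = 0)
    (ΔP : ℝ) (hΔP : ΔP = (Ptdch - Ptch) - (Pdch - Pch)) :
    ΔP = (1 / (ηdch * ηch) - 1) * Pdch ∧ 0 < ΔP := by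
  obtain ⟨h1, h2⟩ := hT
  have heq : ΔP = (1 / (ηdch * ηch) - 1) * Pdch := by
    subst hΔP h1 h2 hΔS
    field_simp
    ring
  refine ⟨heq, ?_⟩
  rw [heq]
  have h : ηdch * ηch < 1 := by nlinarith
  have : 0 < ηdch * ηch := by positivity
  have : 1 < 1 / (ηdch * ηch) := one_lt_one_div this h
  nlinarith
end

section
/- Suppose 0 < η_ch ≤ 1, 0 < η_dch ≤ 1, η_ch·η_dch < 1, P_ch > 0, P_dch > 0, and ΔS = P_ch·η_ch − P_dch/η_dch < 0. Let (P̃_ch, P̃_dch) = (0, −ΔS·η_dch). Then the change in net injected power ΔP = (P̃_dch − P̃_ch) − (P_dch − P_ch) satisfies ΔP = (1 − η_ch·η_dch)·P_ch > 0. -/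
theorem storage_equiv_net_power_change_neg
    (ηch ηdch Pch Pdch ΔS : ℝ)
    (hch : 0 < ηch) (hch1 : ηch ≤ 1)
    (hdch : 0 < ηdch) (hdch1 : ηdch ≤ 1)
    (hprod : ηch * ηdch < 1)
    (hPch : 0 < Pch) (hPdch : 0 < Pdch)
    (hΔS : ΔS = Pch * ηch - Pdch / ηdch) (hΔSneg : ΔS < 0)
    (Ptch Ptdch : ℝ) (hT : Ptch = 0 ∧ Ptdch = -ΔS * ηdch)
    (ΔP : ℝ) (hΔP : ΔP = (Ptdch - Ptch) - (Pdch - Pch)) :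
    ΔP = (1 - ηch * ηdch) * Pch ∧ 0 < ΔP := by
  obtain ⟨h1, h2⟩ := hT
  have hne : ηdch ≠ 0 := ne_of_gt hdch
  have heq : ΔP = (1 - ηch * ηdch) * Pch := by
    subst hΔP h1 h2 hΔS
    field_simp
    ring
  exact ⟨heq, heq ▸ mul_pos (by linarith) hPch⟩
end

section
/- The change in net injected storage power under the storage-energy-equivalent transformation is always nonnegative: for any P_ch, P_dch ≥ 0 with efficiencies η_ch, η_dch ∈ (0,1], (P̃_dch − P̃_ch) − (P_dch − P_ch) ≥ 0. -/
theorem storage_equiv_net_power_change_always_nonneg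
    (ηch ηdch Pch Pdch ΔS : ℝ)
    (hch : 0 < ηch) (hch1 : ηch ≤ 1)
    (hdch : 0 < ηdch) (hdch1 : ηdch ≤ 1)
    (hPch : 0 ≤ Pch) (hPdch : 0 ≤ Pdch)
    (hΔS : ΔS = Pch * ηch - Pdch / ηdch)
    (Ptch Ptdch : ℝ)
    (hT : (Ptch, Ptdch) = if 0 ≤ ΔS then (ΔS / ηch, (0:ℝ)) else ((0:ℝ), -ΔS * ηdch)) :
    0 ≤ (Ptdch - Ptch) - (Pdch - Pch) := by
  have hη : ηch * ηdch ≤ 1 := by nlinarith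
  by_cases h : 0 ≤ ΔS
  · rw [if_pos h, Prod.mk.injEq] at hT
    obtain ⟨h1, h2⟩ := hT
    subst h1 h2 hΔS
    have e1 : (Pch * ηch - Pdch / ηdch) / ηch * ηch = Pch * ηch - Pdch / ηdch :=
      div_mul_cancel₀ _ (ne_of_gt hch)
    have e2 : Pdch / ηdch * ηdch = Pdch := div_mul_cancel₀ _ (ne_of_gt hdch)
    have hx : 0 ≤ Pdch / ηdch := by positivity
    nlinarith [mul_pos hch hdch]
  · rw [if_neg h, Prod.mk.injEq] at hT
    obtain ⟨h1, h2⟩ := hT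
    subst h1 h2 hΔS
    have : Pdch / ηdch * ηdch = Pdch := div_mul_cancel₀ _ (ne_of_gt hdch)
    nlinarith
end

section
/- Suppose η_ch, η_dch ∈ (0,1] with η_ch·η_dch < 1, P_ch, P_dch ≥ 0, P_RES ≥ P_curt ≥ 0, and the condition (P_RES − P_curt)/(1 − η_ch·η_dch) ≥ min(P_ch, P_dch/(η_ch·η_dch)) holds. Then the modified curtailment P̃_curt = P_curt + ΔP, where ΔP = (P̃_dch − P̃_ch) − (P_dch − P_ch) under the storage-energy-equivalent transformation, satisfies 0 ≤ P̃_curt ≤ P_RES. -/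
theorem modified_curtailment_feasible
    (ηch ηdch Pch Pdch ΔS PRES Pcurt : ℝ)
    (hch : 0 < ηch) (hch1 : ηch ≤ 1)
    (hdch : 0 < ηdch) (hdch1 : ηdch ≤ 1)
    (hprod : ηch * ηdch < 1)
    (hPch : 0 ≤ Pch) (hPdch : 0 ≤ Pdch)
    (hcurt0 : 0 ≤ Pcurt) (hcurt1 : Pcurt ≤ PRES)
    (hΔS : ΔS = Pch * ηch - Pdch / ηdch)
    (hcond : (PRES - Pcurt) / (1 - ηch * ηdch) ≥ min Pch (Pdch / (ηch * ηdch)))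
    (Ptch Ptdch : ℝ)
    (hT : (Ptch, Ptdch) = if 0 ≤ ΔS then (ΔS / ηch, (0:ℝ)) else ((0:ℝ), -ΔS * ηdch))
    (ΔP : ℝ) (hΔP : ΔP = (Ptdch - Ptch) - (Pdch - Pch)) :
    0 ≤ Pcurt + ΔP ∧ Pcurt + ΔP ≤ PRES := by
  have hp : 0 < ηch * ηdch := mul_pos hch hdch
  have h1p : 0 < 1 - ηch * ηdch := by linarith
  by_cases h : 0 ≤ ΔS
  · rw [if_pos h] at hT
    have h1 : Ptch = ΔS / ηch := (Prod.mk.injEq _ _ _ _ ▸ hT).1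
    have h2 : Ptdch = 0 := (Prod.mk.injEq _ _ _ _ ▸ hT).2
    have hΔP' : ΔP = Pdch / (ηch * ηdch) - Pdch := by
      rw [hΔP, h1, h2, hΔS]
      field_simp
      ring
    -- ΔS ≥ 0 means Pch ≥ Pdch/(ηch ηdch)
    have hge : Pdch / (ηch * ηdch) ≤ Pch := by
      rw [div_le_iff₀ hp]
      rw [hΔS, sub_nonneg, div_le_iff₀ hdch] at h
      nlinarith
    have hmin : min Pch (Pdch / (ηch * ηdch)) = Pdch / (ηch * ηdch) :=
      min_eq_right hge
    rw [hmin, ge_iff_le, le_div_iff₀ h1p] at hcond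
    have hΔPnn : 0 ≤ ΔP := by
      rw [hΔP']
      have : Pdch ≤ Pdch / (ηch * ηdch) := by
        rw [le_div_iff₀ hp]
        nlinarith
      linarith
    constructor
    · linarith
    · have heq : ΔP = Pdch / (ηch * ηdch) * (1 - ηch * ηdch) := by
        rw [hΔP']; field_simp
      linarith
  · rw [if_neg h] at hT
    have h1 : Ptch = 0 := (Prod.mk.injEq _ _ _ _ ▸ hT).1
    have h2 : Ptdch = -ΔS * ηdch := (Prod.mk.injEq _ _ _ _ ▸ hT).2
    push_neg at h
    have hΔP' : ΔP = Pch * (1 - ηch * ηdch) := by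
      rw [hΔP, h1, h2, hΔS]
      field_simp
      ring
    have hlt : Pch < Pdch / (ηch * ηdch) := by
      rw [lt_div_iff₀ hp]
      rw [hΔS, sub_neg, lt_div_iff₀ hdch] at h
      nlinarith
    have hmin : min Pch (Pdch / (ηch * ηdch)) = Pch := min_eq_left hlt.le
    rw [hmin, ge_iff_le, le_div_iff₀ h1p] at hcond
    have hΔPnn : 0 ≤ ΔP := by
      rw [hΔP']; positivity
    exact ⟨by linarith, by nlinarith⟩
end

section
/- Consider minimizing a strictly increasing function of grid purchase c(P_e) subject to the power balance P_e + (P_dch − P_ch) + P_RES − P_curt = L with P_curt = 0 fixed, P_ch, P_dch ≥ 0, storage net energy change ΔS = P_ch·η_ch − P_dch/η_dch fixed, and η_ch·η_dch < 1. Then at any optimum, P_ch·P_dch = 0. -/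
theorem no_simultaneous_charge_discharge_at_optimum
    (ηch ηdch PRES L S₀ : ℝ)
    (hch : 0 < ηch) (hch1 : ηch ≤ 1)
    (hdch : 0 < ηdch) (hdch1 : ηdch ≤ 1)
    (hprod : ηch * ηdch < 1)
    (c : ℝ → ℝ) (hc : StrictMono c)
    (K : Set (ℝ × ℝ × ℝ))
    (hK : K = {p : ℝ × ℝ × ℝ |
      p.1 + (p.2.2 - p.2.1) + PRES - 0 = L ∧ 0 ≤ p.2.1 ∧ 0 ≤ p.2.2 ∧
      p.2.1 * ηch - p.2.2 / ηdch = S₀})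
    (Pe Pch Pdch : ℝ)
    (hopt : (Pe, Pch, Pdch) ∈ K ∧ ∀ q ∈ K, c Pe ≤ c q.1) :
    Pch * Pdch = 0 := by
  by_contra hne
  obtain ⟨hmem, hmin⟩ := hopt
  rw [hK] at hmem
  obtain ⟨hbal, hch0, hdch0, hS⟩ := hmem
  simp only at hbal hch0 hdch0 hS
  have hη : 0 < ηch * ηdch := mul_pos hch hdch
  have hPch : 0 < Pch := lt_of_le_of_ne hch0 (by rintro rfl; exact hne (by ring))
  have hPdch : 0 < Pdch := lt_of_le_of_ne hdch0 (by rintro rfl; exact hne (by ring))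
  set δ := min Pdch (Pch * (ηch * ηdch)) with hδdef
  have hδpos : 0 < δ := lt_min hPdch (mul_pos hPch hη)
  have hδ1 : δ ≤ Pdch := min_le_left _ _
  have hδ2 : δ ≤ Pch * (ηch * ηdch) := min_le_right _ _
  set Pch' := Pch - δ / (ηch * ηdch) with hPch'
  set Pdch' := Pdch - δ with hPdch'
  set Pe' := L - PRES - (Pdch' - Pch') with hPe'
  have hmem' : (Pe', Pch', Pdch') ∈ K := by
    rw [hK]
    refine ⟨by simp [hPe'], ?_, ?_, ?_⟩
    · simp only [hPch']
      have : δ / (ηch * ηdch) ≤ Pch := (div_le_iff₀ hη).mpr (by linarith)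
      linarith
    · simp only [hPdch']; linarith
    · simp only [hPch', hPdch']
      have key : δ / (ηch * ηdch) * ηch = δ / ηdch := by
        field_simp
      rw [sub_mul, key, sub_div]
      linarith [hS]
  have hPeval : Pe = L - PRES - (Pdch - Pch) := by linarith
  have hlt : Pe' < Pe := by
    rw [hPe', hPeval, hPdch', hPch']
    have : δ < δ / (ηch * ηdch) := by
      rw [lt_div_iff₀ hη]
      nlinarith
    linarith
  have := hmin (Pe', Pch', Pdch') hmem'
  exact absurd this (not_le.mpr (hc hlt))
end
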